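/- If Γ',Δ is a context, Γ ≤ Γ', and T is a Böhm forest that is maximally co-contracted with respect to Γ,Δ, then [Γ',Δ / Γ,Δ]T ≈ [Γ'/Γ]T, where ≈ is bisimilarity treating sums of elimination alternatives as sets (i.e., up to associativity, commutativity, and idempotence of +). -/

import Mathlib

/-!  Formalization of proof search in the sequent calculus LJT (λ̄) with
coinductive Böhm trees/forests (as M-types), following Espírito Santo,
Matthes, Pinto, "A coinductive approach to proof search". -/

namespace LambdaBar

/-- Implicational formulas over atoms (natural numbers). -/
inductive Ty : Type
  | at : ℕ → Ty
  | imp : Ty → Ty → Ty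
  deriving DecidableEq

/-- Contexts: finite lists of declarations `x : A`. -/
abbrev Ctx := List (ℕ × Ty)

/-- A context declares no variable twice. -/
def IsCtx (Γ : Ctx) : Prop := (Γ.map Prod.fst).Nodup

/-- A (possibly redundant) list of declarations is functional, i.e. its
set of declarations is a context. -/
def FunCtx (Γ : Ctx) : Prop := ∀ x A A', (x, A) ∈ Γ → (x, A') ∈ Γ → A = A'

/-- `Ty.mkImp [B₁,…,Bₖ] p` is `B₁ ⊃ … ⊃ Bₖ ⊃ p`. -/
def Ty.mkImp : List Ty → ℕ → Ty
  | [], p => .at p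
  | A :: As, p => .imp A (Ty.mkImp As p)

/-- The vector of premises of a formula: `(A⃗ ⊃ p).args = A⃗`. -/
def Ty.args : Ty → List Ty
  | .at _ => []
  | .imp A B => A :: B.args

/-- The target atom of a formula: `(A⃗ ⊃ p).tgt = p`. -/
def Ty.tgt : Ty → ℕ
  | .at p => p
  | .imp _ B => B.tgt

/-- The set of types declared in a context: `|Γ|`. -/
def tyset (Γ : Ctx) : Finset Ty := (Γ.map Prod.snd).toFinset

/-- `Γ ≤ Γ'`: inclusion of contexts declaring the same set of types. -/
def CtxLe (Γ Γ' : Ctx) : Prop := Γ ⊆ Γ' ∧ tyset Γ = tyset Γ'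

/-! ### Finite λ̄-terms -/

inductive Tm : Type
  | lam : ℕ → Ty → Tm → Tm
  | app : ℕ → List Tm → Tm

/-- Inductive typing of finite λ̄-terms (cut-free system λ̄): rules
`RIntro` and `LVecIntro`. -/
inductive TypedTm : Ctx → Tm → Ty → Prop
  | rIntro {Γ : Ctx} {x : ℕ} {A B : Ty} {t : Tm} :
      TypedTm ((x, A) :: Γ) t B → TypedTm Γ (.lam x A t) (.imp A B)
  | lVecIntro {Γ : Ctx} {x : ℕ} {p : ℕ} {Bs : List Ty} {ts : List Tm} :
      (x, Ty.mkImp Bs p) ∈ Γ → ts.length = Bs.length →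
      (∀ i t B, ts[(i : ℕ)]? = some t → Bs[(i : ℕ)]? = some B → TypedTm Γ t B) →
      TypedTm Γ (.app x ts) (.at p)

/-- Renaming `[x/y]t` on finite terms (replacing free occurrences of `y` by
`x`, respecting shadowing). -/
def Tm.rename (x y : ℕ) : Tm → Tm
  | .lam z A t => .lam z A (if z = y then t else t.rename x y)
  | .app z ts => .app (if z = y then x else z) (ts.attach.map fun u => u.1.rename x y)
decreasing_by
  all_goals simp_wf
  all_goals try omega
  all_goals (have := List.sizeOf_lt_of_mem u.2; omega)

/-! ### Böhm trees (the coinductive terms of λ̄^co), as an M-type -/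

/-- Polynomial functor for Böhm trees: a node is either a λ-abstraction
(one child) or an application `x⟨N₁,…,Nₖ⟩` (`k` children). -/
def BTP : PFunctor.{0} :=
  ⟨Sum (ℕ × Ty) (ℕ × ℕ), fun a =>
    match a with
    | .inl _ => PUnit
    | .inr (_, k) => Fin k⟩

/-- Böhm trees, the (co)terms of system λ̄^co. -/
abbrev BTree : Type := BTP.M

def BTree.lam (x : ℕ) (A : Ty) (N : BTree) : BTree :=
  PFunctor.M.mk ⟨.inl (x, A), fun _ => N⟩

def BTree.app (x : ℕ) (Ns : List BTree) : BTree :=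
  PFunctor.M.mk ⟨.inr (x, Ns.length), fun i => Ns.get i⟩

/-- Embedding of finite λ̄-terms into Böhm trees. -/
def Tm.toBTree : Tm → BTree
  | .lam x A t => BTree.lam x A t.toBTree
  | .app x ts => BTree.app x (ts.attach.map fun u => u.1.toBTree)
decreasing_by
  all_goals simp_wf
  all_goals try omega
  all_goals (have := List.sizeOf_lt_of_mem u.2; omega)

/-- One step of the coinductive typing of Böhm trees: the rules `RIntro`
and `LVecIntro`, read backwards. -/
def TTStep (R : Ctx → BTree → Ty → Prop) (Γ : Ctx) (N : BTree) (A : Ty) : Prop :=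
  match N.dest with
  | ⟨.inl (x, B), f⟩ => ∃ C, A = .imp B C ∧ R ((x, B) :: Γ) (f PUnit.unit) C
  | ⟨.inr (x, k), f⟩ => ∃ p Bs, A = .at p ∧ (x, Ty.mkImp Bs p) ∈ Γ ∧
      Bs.length = k ∧ ∀ (i : Fin k) (B : Ty), Bs[i.val]? = some B → R Γ (f i) B

/-- Coinductive typing of Böhm trees (system λ̄^co): the greatest fixed point
of `TTStep`, i.e. the union of all relations closed backward w.r.t. the rules. -/
def CoTypedT (Γ : Ctx) (N : BTree) (A : Ty) : Prop :=
  ∃ R : Ctx → BTree → Ty → Prop,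
    (∀ Γ' N' A', R Γ' N' A' → TTStep R Γ' N' A') ∧ R Γ N A

/-! ### Böhm forests (the coinductive terms of λ̄^co_Σ), as an M-type -/

/-- Polynomial functor for Böhm forests: a node is either a λ-abstraction
(one child) or a finite sum of elimination alternatives, recorded as the
list of pairs (head variable, arity); a child is addressed by an
alternative index together with an argument position. -/
def BFP : PFunctor.{0} :=
  ⟨Sum (ℕ × Ty) (List (ℕ × ℕ)), fun a =>
    match a with
    | .inl _ => PUnit
    | .inr l => Σ i : Fin l.length, Fin (l.get i).2⟩

/-- Böhm forests, the terms of system λ̄^co_Σ. -/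
abbrev BForest : Type := BFP.M

def BForest.lam (x : ℕ) (A : Ty) (N : BForest) : BForest :=
  PFunctor.M.mk ⟨.inl (x, A), fun _ => N⟩

/-- The empty sum `O`. -/
def BForest.obot : BForest :=
  PFunctor.M.mk ⟨.inr [], fun c => absurd c.1.isLt (by simp)⟩

/-- Sum of elimination alternatives `Σᵢ xᵢ⟨Nᵢ₁,…⟩`. -/
def BForest.alts (Es : List (ℕ × List BForest)) : BForest :=
  PFunctor.M.mk ⟨.inr (Es.map fun e => (e.1, e.2.length)), fun c =>
    (((Es[c.1.val]?).bind fun e => e.2[c.2.val]?).getD BForest.obot)⟩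

/-- A single elimination alternative `x⟨N₁,…,Nₖ⟩` as a forest. -/
def BForest.elim (x : ℕ) (Ns : List BForest) : BForest := BForest.alts [(x, Ns)]

/-- A variable fresh for the domain of `Γ`. -/
def freshVar (Γ : Ctx) : ℕ := (Γ.map Prod.fst).foldr max 0 + 1

/-- The solution space `S(Γ ⊢ A)`, defined by corecursion:
`S(Γ ⊢ A⊃B) = λx^A. S(Γ,x:A ⊢ B)` (with `x` fresh) and
`S(Γ ⊢ p) = Σ_{(y:B⃗⊃p)∈Γ} y⟨S(Γ ⊢ Bⱼ)⟩ⱼ`. -/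
def solSpace : Ctx × Ty → BForest :=
  PFunctor.M.corec fun s =>
    match s with
    | (Γ, .imp A B) => ⟨.inl (freshVar Γ, A), fun _ => ((freshVar Γ, A) :: Γ, B)⟩
    | (Γ, .at p) =>
      let ds := Γ.filter fun d => d.2.tgt = p
      ⟨.inr (ds.map fun d => (d.1, d.2.args.length)), fun c =>
        match ds[c.1.val]? with
        | some d => (Γ, (d.2.args[c.2.val]?).getD (.at p))
        | none => (Γ, .at p)⟩

/-- One step of the coinductive typing of Böhm forests (system λ̄^co_Σ):
rules `RIntro`, `LVecIntro` and `Alts`, read backwards. -/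
def TFStep (R : Ctx → BForest → Ty → Prop) (Γ : Ctx) (N : BForest) (A : Ty) : Prop :=
  match N.dest with
  | ⟨.inl (x, B), f⟩ => ∃ C, A = .imp B C ∧ R ((x, B) :: Γ) (f PUnit.unit) C
  | ⟨.inr l, f⟩ => ∃ p, A = .at p ∧
      ∀ i : Fin l.length, ∃ Bs : List Ty,
        Bs.length = (l.get i).2 ∧ ((l.get i).1, Ty.mkImp Bs p) ∈ Γ ∧
        ∀ (j : Fin (l.get i).2) (B : Ty), Bs[j.val]? = some B → R Γ (f ⟨i, j⟩) B

/-- Coinductive typing of Böhm forests (system λ̄^co_Σ). -/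
def CoTypedF (Γ : Ctx) (N : BForest) (A : Ty) : Prop :=
  ∃ R : Ctx → BForest → Ty → Prop,
    (∀ Γ' N' A', R Γ' N' A' → TFStep R Γ' N' A') ∧ R Γ N A

/-- One step of the membership relation between Böhm trees and Böhm forests. -/
def MemStep (R : BTree → BForest → Prop) (M : BTree) (T : BForest) : Prop :=
  match M.dest, T.dest with
  | ⟨.inl xA, f⟩, ⟨.inl xA', g⟩ => xA = xA' ∧ R (f PUnit.unit) (g PUnit.unit)
  | ⟨.inr (x, k), f⟩, ⟨.inr l, g⟩ =>
      ∃ i : Fin l.length, (l.get i).1 = x ∧ (l.get i).2 = k ∧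
        ∀ (j : Fin k) (j' : Fin (l.get i).2), j.val = j'.val → R (f j) (g ⟨i, j'⟩)
  | _, _ => False

/-- Coinductive membership `mem(M, T)` of a Böhm tree in a Böhm forest. -/
def Mem (M : BTree) (T : BForest) : Prop :=
  ∃ R : BTree → BForest → Prop,
    (∀ M' T', R M' T' → MemStep R M' T') ∧ R M T

/-- One step of (plain, structural) bisimilarity of Böhm forests. -/
def BisimStep (R : BForest → BForest → Prop) (T U : BForest) : Prop :=
  match T.dest, U.dest with
  | ⟨.inl xA, f⟩, ⟨.inl xA', g⟩ => xA = xA' ∧ R (f PUnit.unit) (g PUnit.unit)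
  | ⟨.inr l, f⟩, ⟨.inr l', g⟩ => l = l' ∧
      ∀ (i : Fin l.length) (i' : Fin l'.length) (j : Fin (l.get i).2)
        (j' : Fin (l'.get i').2), i.val = i'.val → j.val = j'.val →
          R (f ⟨i, j⟩) (g ⟨i', j'⟩)
  | _, _ => False

/-- Bisimilarity `≅` of Böhm forests (not identifying sums up to permutation
or multiplicity). -/
def Bisim (T U : BForest) : Prop :=
  ∃ R : BForest → BForest → Prop,
    (∀ T' U', R T' U' → BisimStep R T' U') ∧ R T U

/-- One step of bisimilarity treating sums of elimination alternatives as
sets: each summand on either side is matched by a summand on the other. -/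
def SBisimStep (R : BForest → BForest → Prop) (T U : BForest) : Prop :=
  match T.dest, U.dest with
  | ⟨.inl xA, f⟩, ⟨.inl xA', g⟩ => xA = xA' ∧ R (f PUnit.unit) (g PUnit.unit)
  | ⟨.inr l, f⟩, ⟨.inr l', g⟩ =>
      (∀ i : Fin l.length, ∃ i' : Fin l'.length, l.get i = l'.get i' ∧
        ∀ (j : Fin (l.get i).2) (j' : Fin (l'.get i').2), j.val = j'.val →
          R (f ⟨i, j⟩) (g ⟨i', j'⟩)) ∧
      (∀ i' : Fin l'.length, ∃ i : Fin l.length, l.get i = l'.get i' ∧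
        ∀ (j : Fin (l.get i).2) (j' : Fin (l'.get i').2), j.val = j'.val →
          R (f ⟨i, j⟩) (g ⟨i', j'⟩))
  | _, _ => False

/-- Bisimilarity `≈` of Böhm forests treating sums as sets of alternatives
(i.e. up to associativity, commutativity and idempotence of `+`). -/
def SBisim (T U : BForest) : Prop :=
  ∃ R : BForest → BForest → Prop,
    (∀ T' U', R T' U' → SBisimStep R T' U') ∧ R T U

/-- Lookup of the type of a variable in a context. -/
def ctxLookup (Γ : Ctx) (z : ℕ) : Option Ty :=
  (Γ.find? fun d => d.1 = z).map Prod.snd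

/-- Heads replacing a head variable `z` under co-contraction `[Γ'/Γ]`:
if `(z:A) ∈ Γ`, all `w` with `(w:A) ∈ {(z:A)} ∪ (Γ'∖Γ)`; otherwise just `z`. -/
def expandHeads (Γ Γ' : Ctx) (z : ℕ) : List ℕ :=
  match ctxLookup Γ z with
  | some A => z :: ((Γ'.filter fun d => d ∉ Γ ∧ d.2 = A).map Prod.fst)
  | none => [z]

/-- Co-contraction `[Γ'/Γ]T` on Böhm forests (intended for `Γ ≤ Γ'`),
defined by corecursion. -/
def cocontract (Γ Γ' : Ctx) : BForest → BForest :=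
  PFunctor.M.corec fun T =>
    match T.dest with
    | ⟨.inl xA, f⟩ => ⟨.inl xA, fun _ => f PUnit.unit⟩
    | ⟨.inr l, f⟩ =>
      let entries : List (ℕ × ℕ × Fin l.length) :=
        (List.finRange l.length).flatMap fun i =>
          (expandHeads Γ Γ' (l.get i).1).map fun w => (w, (l.get i).2, i)
      ⟨.inr (entries.map fun e => (e.1, e.2.1)), fun c =>
        match entries[c.1.val]? with
        | some e =>
            if h : c.2.val < (l.get e.2.2).2 then f ⟨e.2.2, ⟨c.2.val, h⟩⟩ else T
        | none => T⟩

/-- Simultaneous renaming on Böhm trees: replaces every free occurrence of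
a variable from `ys` by `x`, respecting shadowing by λ-binders; for
`ys = [x₁,…,xₙ]` and `x = x₁` this is the substitution `[x₁/x₁,…,xₙ]`. -/
def renameT (x : ℕ) (ys : List ℕ) (M : BTree) : BTree :=
  PFunctor.M.corec
    (fun s : BTree × List ℕ =>
      match s.1.dest with
      | ⟨.inl (z, A), f⟩ => ⟨.inl (z, A), fun _ => (f PUnit.unit, s.2.filter (· ≠ z))⟩
      | ⟨.inr (z, k), f⟩ =>
          ⟨.inr (if z ∈ s.2 then x else z, k), fun j => (f j, s.2)⟩)
    (M, ys)

/-- One step of "variable `x` does not occur free in the forest `T`". -/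
def NotFreeStep (R : ℕ → BForest → Prop) (x : ℕ) (T : BForest) : Prop :=
  match T.dest with
  | ⟨.inl (z, _), f⟩ => z = x ∨ R x (f PUnit.unit)
  | ⟨.inr l, f⟩ => (∀ e ∈ l, e.1 ≠ x) ∧ ∀ c, R x (f c)

/-- `x ∉ FV(T)` for a Böhm forest, coinductively. -/
def NotFree (x : ℕ) (T : BForest) : Prop :=
  ∃ R : ℕ → BForest → Prop,
    (∀ x' T', R x' T' → NotFreeStep R x' T') ∧ R x T

/-- The special case `[x₁+⋯+xₙ/x₁]T` of co-contraction, where `xs` lists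
`x₁,…,xₙ`: every application headed by `x₁` is replaced by the sum of the
applications headed by each `xᵢ`. -/
def cocontractVars (x₁ : ℕ) (xs : List ℕ) : BForest → BForest :=
  PFunctor.M.corec fun T =>
    match T.dest with
    | ⟨.inl xA, f⟩ => ⟨.inl xA, fun _ => f PUnit.unit⟩
    | ⟨.inr l, f⟩ =>
      let entries : List (ℕ × ℕ × Fin l.length) :=
        (List.finRange l.length).flatMap fun i =>
          (if (l.get i).1 = x₁ then xs else [(l.get i).1]).map fun w =>
            (w, (l.get i).2, i)
      ⟨.inr (entries.map fun e => (e.1, e.2.1)), fun c =>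
        match entries[c.1.val]? with
        | some e =>
            if h : c.2.val < (l.get e.2.2).2 then f ⟨e.2.2, ⟨c.2.val, h⟩⟩ else T
        | none => T⟩

/-- One step of "maximally co-contracted w.r.t. the (local) context `Θ`":
every head variable of a summand is declared in `Θ`, and for every variable
`y` with the same type in `Θ` the sum also contains a summand headed by `y`
with bisimilar arguments; under a λ, the context is locally extended. -/
def MCCStep (R : Ctx → BForest → Prop) (Θ : Ctx) (T : BForest) : Prop :=
  match T.dest with
  | ⟨.inl (x, A), f⟩ => R ((x, A) :: Θ) (f PUnit.unit)
  | ⟨.inr l, f⟩ =>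
      (∀ i : Fin l.length,
        (∃ A, ((l.get i).1, A) ∈ Θ) ∧
        ∀ (y : ℕ) (A : Ty), ((l.get i).1, A) ∈ Θ → (y, A) ∈ Θ →
          ∃ i' : Fin l.length, (l.get i').1 = y ∧ (l.get i').2 = (l.get i).2 ∧
            ∀ (j : Fin (l.get i).2) (j' : Fin (l.get i').2), j.val = j'.val →
              Bisim (f ⟨i, j⟩) (f ⟨i', j'⟩)) ∧
      ∀ c, R Θ (f c)

/-- `T` is maximally co-contracted w.r.t. `Θ`, coinductively. -/
def MaxCoContracted (Θ : Ctx) (T : BForest) : Prop :=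
  ∃ R : Ctx → BForest → Prop,
    (∀ Θ' T', R Θ' T' → MCCStep R Θ' T') ∧ R Θ T

/-! ### The finitary system λ̄^gfp_Σ -/

/-- Atomic sequents `Γ ⊢ p`. -/
structure ASeq : Type where
  ctx : Ctx
  tgt : ℕ

/-- `σ ≤ σ'` on atomic sequents: `Γ ≤ Γ'` and equal target atoms. -/
def ASeqLe (σ σ' : ASeq) : Prop :=
  σ.ctx ⊆ σ'.ctx ∧ tyset σ.ctx = tyset σ'.ctx ∧ σ.tgt = σ'.tgt

/-- Finitary terms of λ̄^gfp_Σ: `N ::= λx^A.N | gfp X^σ.ΣᵢEᵢ | X^σ` with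
`E ::= x⟨N₁,…,Nₖ⟩`; fixed-point variables are names (naturals) annotated
with atomic sequents. -/
inductive FTm : Type
  | lam : ℕ → Ty → FTm → FTm
  | fpvar : ℕ → ASeq → FTm
  | gfp : ℕ → ASeq → List (ℕ × List FTm) → FTm

/-- `λz₁^{A₁}…zₙ^{Aₙ}.t` for a list of declarations. -/
def lams : Ctx → FTm → FTm
  | [], t => t
  | (x, A) :: r, t => .lam x A (lams r t)

/-- Fresh variables `z₁,…,zₙ` declared with the premises `As`, extending `Γ`. -/
def extArgs (Γ : Ctx) (As : List Ty) : Ctx :=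
  (List.range As.length).zipWith (fun i A => (freshVar Γ + i, A)) As

/-- A fresh fixed-point variable name w.r.t. `Ξ`. -/
def freshFP (Ξ : List (ℕ × ASeq)) : ℕ := (Ξ.map Prod.fst).foldr max 0 + 1

/-- The side condition of the first clause of the definition of `F`:
for `C = A⃗ ⊃ p` and a declaration `X : (Θ ⊢ q)` of `Ξ`:
`p = q`, `Θ ⊆ Γ` and `|Θ| = |Γ| ∪ {A₁,…,Aₙ}`. -/
def HitCond (Γ : Ctx) (As : List Ty) (p : ℕ) (e : ℕ × ASeq) : Prop :=
  e.2.tgt = p ∧ e.2.ctx ⊆ Γ ∧ tyset e.2.ctx = tyset Γ ∪ As.toFinset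

/-- The recursion computing the finitary representation `F(Γ ⊢ C)(Ξ)`,
presented as an inductive graph relation: `FDef Γ C Ξ t` holds iff the
recursive computation of `F(Γ ⊢ C)(Ξ)` terminates with result `t`. -/
inductive FDef : Ctx → Ty → List (ℕ × ASeq) → FTm → Prop
  | hit (Γ : Ctx) (C : Ty) (Ξ : List (ℕ × ASeq)) (i : ℕ) (e : ℕ × ASeq) :
      Ξ[i]? = some e → HitCond Γ C.args C.tgt e →
      (∀ i' e', i < i' → Ξ[i']? = some e' → ¬ HitCond Γ C.args C.tgt e') →
      FDef Γ C Ξ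
        (lams (extArgs Γ C.args)
          (.fpvar e.1 ⟨Γ ++ extArgs Γ C.args, C.tgt⟩))
  | miss (Γ : Ctx) (C : Ty) (Ξ : List (ℕ × ASeq)) (alts : List (ℕ × List FTm)) :
      (∀ e ∈ Ξ, ¬ HitCond Γ C.args C.tgt e) →
      alts.length =
        ((Γ ++ extArgs Γ C.args).filter fun d => d.2.tgt = C.tgt).length →
      (∀ (i : ℕ) (d : ℕ × Ty) (a : ℕ × List FTm),
        ((Γ ++ extArgs Γ C.args).filter fun d => d.2.tgt = C.tgt)[i]? = some d →
        alts[i]? = some a → a.1 = d.1) →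
      (∀ (i : ℕ) (d : ℕ × Ty) (a : ℕ × List FTm),
        ((Γ ++ extArgs Γ C.args).filter fun d => d.2.tgt = C.tgt)[i]? = some d →
        alts[i]? = some a → a.2.length = d.2.args.length) →
      (∀ (i : ℕ) (d : ℕ × Ty) (a : ℕ × List FTm) (j : ℕ) (B : Ty) (t : FTm),
        ((Γ ++ extArgs Γ C.args).filter fun d => d.2.tgt = C.tgt)[i]? = some d →
        alts[i]? = some a → d.2.args[j]? = some B → a.2[j]? = some t →
        FDef (Γ ++ extArgs Γ C.args) B
          (Ξ ++ [(freshFP Ξ, ⟨Γ ++ extArgs Γ C.args, C.tgt⟩)]) t) →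
      FDef Γ C Ξ
        (lams (extArgs Γ C.args)
          (.gfp (freshFP Ξ) ⟨Γ ++ extArgs Γ C.args, C.tgt⟩ alts))

/-- Subformulas of a formula. -/
def Ty.subs : Ty → Finset Ty
  | .at p => {.at p}
  | .imp A B => insert (.imp A B) (A.subs ∪ B.subs)

/-- A finite set of formulas is subformula-closed. -/
def SubClosed (𝒜 : Finset Ty) : Prop := ∀ A ∈ 𝒜, A.subs ⊆ 𝒜

/-- The `𝒜`-invariant for a sequent `Γ ⊢ C` and a vector `Ξ` of fixed-point
declarations `Xᵢ : (Θᵢ ⊢ qᵢ)`: (i) `|Γ| ∪ {C} ⊆ 𝒜`; (ii) `Θ₁ ⊆ … ⊆ Θₘ = Γ`;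
(iii) each `qⱼ` is a subformula of a formula of `|Γ|`; (iv) the strippings
of the sequents of `Ξ` are pairwise distinct. -/
def AInvariant (𝒜 : Finset Ty) (Γ : Ctx) (C : Ty) (Ξ : List (ℕ × ASeq)) : Prop :=
  (tyset Γ ∪ {C} ⊆ 𝒜) ∧
  (∀ (i : ℕ) (e e' : ℕ × ASeq), Ξ[i]? = some e → Ξ[(i+1)]? = some e' →
      e.2.ctx ⊆ e'.2.ctx) ∧
  (∀ e : ℕ × ASeq, Ξ.getLast? = some e → e.2.ctx = Γ) ∧
  (∀ e ∈ Ξ, ∃ A ∈ tyset Γ, (Ty.at e.2.tgt) ∈ A.subs) ∧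
  (Ξ.map fun e => ((tyset e.2.ctx, e.2.tgt) : Finset Ty × ℕ)).Nodup

/-- `t` has no free occurrence of a fixed-point variable outside the list
`b` of bound names (recall that `gfp X^σ` binds all `X^{σ'}`). -/
inductive FPClosed : List ℕ → FTm → Prop
  | lam {b x A t} : FPClosed b t → FPClosed b (.lam x A t)
  | fpvar {b X σ} : X ∈ b → FPClosed b (.fpvar X σ)
  | gfp {b X σ alts} : (∀ a ∈ alts, ∀ t ∈ a.2, FPClosed (X :: b) t) →
      FPClosed b (.gfp X σ alts)

/-- Environments for the interpretation: finite assignments of Böhm forests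
to fixed-point variables typed by atomic sequents. -/
abbrev Env : Type := List (ℕ × ASeq × BForest)

def envLookup (ξ : Env) (X : ℕ) : Option (ASeq × BForest) :=
  (ξ.find? fun e => e.1 = X).map Prod.snd

/-- The label of a sum node for a list of alternatives. -/
def altsLabel (alts : List (ℕ × List FTm)) : List (ℕ × ℕ) :=
  alts.map fun e => (e.1, e.2.length)

/-- One step of the interpretation relation `⟦t⟧_ξ = N` of finitary terms as
Böhm forests: `⟦λx^A.t⟧` commutes with λ; `⟦X^{σ'}⟧_ξ = [σ'/σ]ξ(X^σ)`
(co-contraction) for the unique binding of `X` in `ξ`; and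
`⟦gfp X^σ.ΣᵢEᵢ⟧_ξ` is the forest `N` with `N = Σᵢ⟦Eᵢ⟧_{ξ∪[X^σ↦N]}`. -/
def InterpStep (R : FTm → Env → BForest → Prop) :
    FTm → Env → BForest → Prop
  | .lam x A t, ξ, N =>
      ∃ g, N.dest = ⟨.inl (x, A), g⟩ ∧ R t ξ (g PUnit.unit)
  | .fpvar X σ', ξ, N =>
      ∃ (σ : ASeq) (M : BForest), envLookup ξ X = some (σ, M) ∧ ASeqLe σ σ' ∧
        N = cocontract σ.ctx σ'.ctx M
  | .gfp X σ alts, ξ, N =>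
      ∃ g, N.dest = ⟨.inr (altsLabel alts), g⟩ ∧
        ∀ (c : Σ i : Fin (altsLabel alts).length, Fin ((altsLabel alts).get i).2)
          (a : ℕ × List FTm) (t : FTm),
            alts[c.1.val]? = some a → a.2[c.2.val]? = some t →
              R t (ξ ++ [(X, σ, N)]) (g c)

/-- The interpretation relation `⟦t⟧_ξ = N`, coinductively
(as the greatest fixed point of `InterpStep`). -/
def Interp (t : FTm) (ξ : Env) (N : BForest) : Prop :=
  ∃ R : FTm → Env → BForest → Prop,
    (∀ t' ξ' N', R t' ξ' N' → InterpStep R t' ξ' N') ∧ R t ξ N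

end LambdaBar

open LambdaBar

namespace LambdaBar

theorem cocontract_dest_inl {Γ Γ' : Ctx} {T : BForest} {xA f}
    (hT : T.dest = ⟨.inl xA, f⟩) :
    (cocontract Γ Γ' T).dest
      = ⟨.inl xA, fun _ => cocontract Γ Γ' (f PUnit.unit)⟩ := by
  unfold cocontract
  rw [PFunctor.M.dest_corec]
  simp only [hT]
  rfl

theorem map_get_aux {α β : Type} (f : α → β) (E : List α) (i : Fin (E.map f).length) :
    ∃ h : i.val < E.length, (E.map f).get i = f (E.get ⟨i.val, h⟩) ∧
      E[i.val]? = some (E.get ⟨i.val, h⟩) := by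
  have h : i.val < E.length := by simpa using i.isLt
  refine ⟨h, ?_, List.getElem?_eq_getElem h⟩
  have h1 := List.getElem?_eq_getElem (l := E.map f) i.isLt
  rw [List.getElem?_map, List.getElem?_eq_getElem h, Option.map_some] at h1
  exact (Option.some.inj h1).symm

end LambdaBar
namespace LambdaBar

theorem bisim_refl (T : BForest) : Bisim T T := by
  refine ⟨Eq, fun T' U' h => ?_, rfl⟩
  subst h
  unfold BisimStep
  rcases hT : T'.dest with ⟨a, f⟩
  rcases a with xA | l
  · exact ⟨rfl, rfl⟩
  · refine ⟨rfl, fun i i' j j' hi hj => ?_⟩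
    have : i = i' := Fin.ext hi
    subst this
    have : j = j' := Fin.ext hj
    subst this
    rfl

theorem bisimStep_inl {R : BForest → BForest → Prop} {T U : BForest} {xA f}
    (h : BisimStep R T U) (hT : T.dest = ⟨.inl xA, f⟩) :
    ∃ g, U.dest = ⟨.inl xA, g⟩ ∧ R (f PUnit.unit) (g PUnit.unit) := by
  unfold BisimStep at h
  rw [hT] at h
  rcases hU : U.dest with ⟨a, g⟩
  rw [hU] at h
  rcases a with xA' | l'
  · obtain ⟨h1, h2⟩ := h
    subst h1
    exact ⟨g, rfl, h2⟩
  · exact absurd h not_false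

theorem bisimStep_inr {R : BForest → BForest → Prop} {T U : BForest} {l f}
    (h : BisimStep R T U) (hT : T.dest = ⟨.inr l, f⟩) :
    ∃ g, U.dest = ⟨.inr l, g⟩ ∧ ∀ (i i' : Fin l.length) (j : Fin (l.get i).2)
      (j' : Fin (l.get i').2), i.val = i'.val → j.val = j'.val →
        R (f ⟨i, j⟩) (g ⟨i', j'⟩) := by
  unfold BisimStep at h
  rw [hT] at h
  rcases hU : U.dest with ⟨a, g⟩
  rw [hU] at h
  rcases a with xA' | l'
  · exact absurd h not_false
  · obtain ⟨h1, h2⟩ := h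
    subst h1
    exact ⟨g, rfl, h2⟩

theorem bisim_dest {T U : BForest} (h : Bisim T U) : BisimStep Bisim T U := by
  obtain ⟨R, hcl, hR⟩ := h
  have := hcl _ _ hR
  unfold BisimStep at this ⊢
  rcases hT : T.dest with ⟨a, f⟩
  rw [hT] at this
  rcases hU : U.dest with ⟨b, g⟩
  rw [hU] at this
  rcases a with xA | l <;> rcases b with xA' | l'
  · exact ⟨this.1, R, hcl, this.2⟩
  · exact this
  · exact this
  · exact ⟨this.1, fun i i' j j' hi hj => ⟨R, hcl, this.2 i i' j j' hi hj⟩⟩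

theorem bisim_trans {T U V : BForest} (h1 : Bisim T U) (h2 : Bisim U V) : Bisim T V := by
  refine ⟨fun T V => ∃ U, Bisim T U ∧ Bisim U V, fun T' V' h => ?_, U, h1, h2⟩
  obtain ⟨U', hTU, hUV⟩ := h
  unfold BisimStep
  rcases hT : T'.dest with ⟨a, f⟩
  rcases a with xA | l
  · obtain ⟨g, hU, hR⟩ := bisimStep_inl (bisim_dest hTU) hT
    obtain ⟨k, hV, hR'⟩ := bisimStep_inl (bisim_dest hUV) hU
    rw [hV]
    exact ⟨rfl, _, hR, hR'⟩
  · obtain ⟨g, hU, hR⟩ := bisimStep_inr (bisim_dest hTU) hT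
    obtain ⟨k, hV, hR'⟩ := bisimStep_inr (bisim_dest hUV) hU
    rw [hV]
    exact ⟨rfl, fun i i' j j' hi hj => ⟨g ⟨i, j⟩, hR i i j j rfl rfl, hR' i i' j j' hi hj⟩⟩

theorem mcc_dest {Θ : Ctx} {T : BForest} (h : MaxCoContracted Θ T) :
    MCCStep MaxCoContracted Θ T := by
  obtain ⟨R, hcl, hR⟩ := h
  have := hcl _ _ hR
  unfold MCCStep at this ⊢
  rcases hT : T.dest with ⟨a, f⟩
  rw [hT] at this
  rcases a with xA | l
  · exact ⟨R, hcl, this⟩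
  · exact ⟨this.1, fun c => ⟨R, hcl, this.2 c⟩⟩

end LambdaBar
namespace LambdaBar

/-- The list of entries of a sum node under co-contraction. -/
def entriesOf (Γ Γ' : Ctx) (l : List (ℕ × ℕ)) : List (ℕ × ℕ × Fin l.length) :=
  (List.finRange l.length).flatMap fun i =>
    (expandHeads Γ Γ' (l.get i).1).map fun w => (w, (l.get i).2, i)

theorem cocontract_dest_inr {Γ Γ' : Ctx} {T : BForest} {l f}
    (hT : T.dest = ⟨.inr l, f⟩) :
    ∃ G : BFP.B (Sum.inr ((entriesOf Γ Γ' l).map fun e => (e.1, e.2.1))) → BForest,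
      (cocontract Γ Γ' T).dest
        = ⟨.inr ((entriesOf Γ Γ' l).map fun e => (e.1, e.2.1)), G⟩ ∧
      ∀ (i : Fin ((entriesOf Γ Γ' l).map fun e => (e.1, e.2.1)).length)
        (j : Fin ((((entriesOf Γ Γ' l).map fun e => (e.1, e.2.1)).get i).2))
        (e : ℕ × ℕ × Fin l.length),
        (entriesOf Γ Γ' l)[i.val]? = some e →
        ∀ h2 : j.val < (l.get e.2.2).2,
          G ⟨i, j⟩ = cocontract Γ Γ' (f ⟨e.2.2, ⟨j.val, h2⟩⟩) := by
  unfold cocontract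
  rw [PFunctor.M.dest_corec]
  simp only [hT]
  refine ⟨_, rfl, fun i j e he h2 => ?_⟩
  have he' : ((List.finRange l.length).flatMap fun i =>
      List.map (fun w => (w, (l.get i).2, i)) (expandHeads Γ Γ' (l.get i).1))[i.val]?
      = some e := he
  dsimp only [Function.comp]
  congr 1
  simp only [he']
  rw [dif_pos h2]

end LambdaBar
namespace LambdaBar

theorem entriesOf_shape {Γ Γ' : Ctx} {l : List (ℕ × ℕ)} {e : ℕ × ℕ × Fin l.length}
    (h : e ∈ entriesOf Γ Γ' l) :
    e.1 ∈ expandHeads Γ Γ' (l.get e.2.2).1 ∧ e.2.1 = (l.get e.2.2).2 := by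
  simp only [entriesOf, List.mem_flatMap, List.mem_map] at h
  obtain ⟨i, -, w, hw, rfl⟩ := h
  exact ⟨hw, rfl⟩

theorem entriesOf_mem {Γ Γ' : Ctx} {l : List (ℕ × ℕ)} (i : Fin l.length) {w : ℕ}
    (hw : w ∈ expandHeads Γ Γ' (l.get i).1) :
    (w, (l.get i).2, i) ∈ entriesOf Γ Γ' l := by
  simp only [entriesOf, List.mem_flatMap, List.mem_map]
  exact ⟨i, List.mem_finRange i, w, hw, rfl⟩

theorem ctxLookup_append_some {Γ Δ : Ctx} {z : ℕ} {A : Ty}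
    (h : ctxLookup Γ z = some A) : ctxLookup (Γ ++ Δ) z = some A := by
  unfold ctxLookup at h ⊢
  rw [List.find?_append]
  rcases hf : Γ.find? fun d => d.1 = z with _ | d
  · rw [hf] at h; simp at h
  · rw [hf] at h ⊢
    show Option.map Prod.snd (some d) = some A
    simpa using h

theorem ctxLookup_append_none {Γ Δ : Ctx} {z : ℕ}
    (h : ctxLookup Γ z = none) : ctxLookup (Γ ++ Δ) z = ctxLookup Δ z := by
  unfold ctxLookup at h ⊢
  rw [List.find?_append]
  rcases hf : Γ.find? fun d => d.1 = z with _ | d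
  · rw [hf]
    rfl
  · rw [hf] at h; simp at h

theorem ctxLookup_mem {Γ : Ctx} {z : ℕ} {A : Ty}
    (h : ctxLookup Γ z = some A) : (z, A) ∈ Γ := by
  unfold ctxLookup at h
  rcases hf : Γ.find? fun d => d.1 = z with _ | d
  · rw [hf] at h; simp at h
  · rw [hf] at h
    simp only [Option.map_some, Option.some.injEq] at h
    have h1 := List.mem_of_find?_eq_some hf
    have h2 := List.find?_some hf
    simp only [decide_eq_true_eq] at h2
    have : d = (z, A) := Prod.ext h2 h
    rwa [this] at h1

theorem nodup_functional {L : Ctx} (h : (L.map Prod.fst).Nodup) {y : ℕ} {A B : Ty}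
    (h1 : (y, A) ∈ L) (h2 : (y, B) ∈ L) : A = B := by
  have := List.inj_on_of_nodup_map h h1 h2 rfl
  exact congrArg Prod.snd this

theorem expandHeads_none {Γ Γ' : Ctx} {z : ℕ} (h : ctxLookup Γ z = none) :
    expandHeads Γ Γ' z = [z] := by
  unfold expandHeads; rw [h]

theorem expandHeads_some {Γ Γ' : Ctx} {z : ℕ} {A : Ty} (h : ctxLookup Γ z = some A) :
    expandHeads Γ Γ' z = z :: ((Γ'.filter fun d => d ∉ Γ ∧ d.2 = A).map Prod.fst) := by
  unfold expandHeads; rw [h]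

theorem filter_big_eq {Γ Γ' Δ : Ctx} (hctx : IsCtx (Γ' ++ Δ)) (A : Ty) :
    ((Γ' ++ Δ).filter fun d => d ∉ Γ ++ Δ ∧ d.2 = A)
      = Γ'.filter fun d => d ∉ Γ ∧ d.2 = A := by
  rw [List.filter_append]
  have h1 : (Δ.filter fun d => decide (d ∉ Γ ++ Δ ∧ d.2 = A)) = [] := by
    rw [List.filter_eq_nil_iff]
    intro d hd
    simp only [decide_eq_true_eq, not_and]
    intro hn
    exact absurd (List.mem_append_right Γ hd) hn
  rw [h1, List.append_nil]
  apply List.filter_congr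
  intro d hd
  have hdisj : ∀ a ∈ Γ'.map Prod.fst, a ∈ Δ.map Prod.fst → False := by
    have := hctx
    unfold IsCtx at this
    rw [List.map_append, List.nodup_append] at this
    exact fun a ha hb => this.2.2 a ha a hb rfl
  have hnΔ : d ∉ Δ := fun hΔ =>
    hdisj d.1 (List.mem_map_of_mem (f := Prod.fst) hd) (List.mem_map_of_mem (f := Prod.fst) hΔ)
  simp only [decide_eq_decide, List.mem_append]
  constructor
  · rintro ⟨hn, h2⟩; exact ⟨fun hg => hn (Or.inl hg), h2⟩
  · rintro ⟨hn, h2⟩; exact ⟨fun hg => hg.elim hn hnΔ, h2⟩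

theorem expandHeads_big_eq {Γ Γ' Δ : Ctx} {z : ℕ} {A : Ty} (hctx : IsCtx (Γ' ++ Δ))
    (h : ctxLookup Γ z = some A) :
    expandHeads (Γ ++ Δ) (Γ' ++ Δ) z = expandHeads Γ Γ' z := by
  rw [expandHeads_some (ctxLookup_append_some h), expandHeads_some h, filter_big_eq hctx]

end LambdaBar
namespace LambdaBar

theorem backward_match {Γ Γ' Δ : Ctx} (hctx : IsCtx (Γ' ++ Δ)) {z w : ℕ}
    (hw : w ∈ expandHeads Γ Γ' z) : w ∈ expandHeads (Γ ++ Δ) (Γ' ++ Δ) z := by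
  rcases hsm : ctxLookup Γ z with _ | A
  · rw [expandHeads_none hsm] at hw
    simp only [List.mem_singleton] at hw
    subst hw
    rcases hbig : ctxLookup (Γ ++ Δ) w with _ | B
    · rw [expandHeads_none hbig]; simp
    · rw [expandHeads_some hbig]; exact List.mem_cons_self
  · rwa [expandHeads_big_eq hctx hsm]

theorem forward_match {Γ Γ' Δ Λ : Ctx} (hctx : IsCtx (Γ' ++ Δ)) (hle : CtxLe Γ Γ')
    {l : List (ℕ × ℕ)} {f : BFP.B (Sum.inr l) → BForest} (i : Fin l.length)
    (hmcc : ∀ (y : ℕ) (A : Ty), ((l.get i).1, A) ∈ Λ ++ (Γ ++ Δ) →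
      (y, A) ∈ Λ ++ (Γ ++ Δ) →
      ∃ i' : Fin l.length, (l.get i').1 = y ∧ (l.get i').2 = (l.get i).2 ∧
        ∀ (j : Fin (l.get i).2) (j' : Fin (l.get i').2), j.val = j'.val →
          Bisim (f ⟨i, j⟩) (f ⟨i', j'⟩))
    {w : ℕ} (hw : w ∈ expandHeads (Γ ++ Δ) (Γ' ++ Δ) (l.get i).1) :
    ∃ i' : Fin l.length, w ∈ expandHeads Γ Γ' (l.get i').1 ∧
      (l.get i').2 = (l.get i).2 ∧
      ∀ (j : Fin (l.get i).2) (j' : Fin (l.get i').2), j.val = j'.val →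
        Bisim (f ⟨i, j⟩) (f ⟨i', j'⟩) := by
  have hrefl : ∀ (j : Fin (l.get i).2) (j' : Fin (l.get i).2), j.val = j'.val →
      Bisim (f ⟨i, j⟩) (f ⟨i, j'⟩) := by
    intro j j' hjj
    have : j = j' := Fin.ext hjj
    subst this; exact bisim_refl _
  rcases hbig : ctxLookup (Γ ++ Δ) (l.get i).1 with _ | A
  · rw [expandHeads_none hbig] at hw
    simp only [List.mem_singleton] at hw
    subst hw
    have hsm : ctxLookup Γ (l.get i).1 = none := by
      rcases hsm : ctxLookup Γ (l.get i).1 with _ | B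
      · rfl
      · rw [ctxLookup_append_some hsm] at hbig; exact absurd hbig (by simp)
    exact ⟨i, by rw [expandHeads_none hsm]; simp, rfl, hrefl⟩
  · rcases hsm : ctxLookup Γ (l.get i).1 with _ | A'
    · -- the interesting case: head found only in Δ
      rw [expandHeads_some hbig] at hw
      rcases List.mem_cons.mp hw with rfl | hw
      · exact ⟨i, by rw [expandHeads_none hsm]; simp, rfl, hrefl⟩
      simp only [List.mem_map, List.mem_filter] at hw
      obtain ⟨d, ⟨hdmem, hdcond⟩, rfl⟩ := hw
      simp only [decide_eq_true_eq] at hdcond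
      obtain ⟨hdnot, hdA⟩ := hdcond
      have hdΓ' : d ∈ Γ' := by
        rcases List.mem_append.mp hdmem with h | h
        · exact h
        · exact absurd (List.mem_append_right Γ h) hdnot
      have hA : A ∈ tyset Γ := by
        rw [hle.2]
        unfold tyset
        rw [List.mem_toFinset, List.mem_map]
        exact ⟨d, hdΓ', hdA⟩
      have hA' : ∃ dy ∈ Γ, dy.2 = A := by
        unfold tyset at hA
        rw [List.mem_toFinset, List.mem_map] at hA
        exact hA
      obtain ⟨dy, hdyΓ, hdyA⟩ := hA'
      have hzΘ : ((l.get i).1, A) ∈ Λ ++ (Γ ++ Δ) :=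
        List.mem_append_right _ (ctxLookup_mem hbig)
      have hyΘ : (dy.1, A) ∈ Λ ++ (Γ ++ Δ) := by
        apply List.mem_append_right
        apply List.mem_append_left
        have : (dy.1, A) = dy := Prod.ext rfl hdyA.symm
        rwa [this]
      obtain ⟨i', hy, harity, hbis⟩ := hmcc dy.1 A hzΘ hyΘ
      -- lookup of dy.1 in Γ gives A
      have hndΓ' : (Γ'.map Prod.fst).Nodup := by
        have := hctx
        unfold IsCtx at this
        rw [List.map_append] at this
        exact this.of_append_left
      have hfind : ∃ d₀, Γ.find? (fun d => d.1 = dy.1) = some d₀ := by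
        rw [← Option.isSome_iff_exists, List.find?_isSome]
        exact ⟨dy, hdyΓ, by simp⟩
      obtain ⟨d₀, hd₀⟩ := hfind
      have hd₀mem := List.mem_of_find?_eq_some hd₀
      have hd₀fst : d₀.1 = dy.1 := by
        have := List.find?_some hd₀
        simpa using this
      have hd₀A : d₀.2 = A := by
        apply nodup_functional hndΓ' (y := dy.1)
        · have : (dy.1, d₀.2) = d₀ := Prod.ext hd₀fst.symm rfl
          rw [this]
          exact hle.1 hd₀mem
        · have : (dy.1, A) = dy := Prod.ext rfl hdyA.symm
          rw [this]
          exact hle.1 hdyΓ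
      have hlook : ctxLookup Γ dy.1 = some A := by
        unfold ctxLookup
        rw [hd₀, Option.map_some, hd₀A]
      refine ⟨i', ?_, harity, hbis⟩
      rw [hy, expandHeads_some hlook]
      apply List.mem_cons_of_mem
      simp only [List.mem_map, List.mem_filter]
      refine ⟨d, ⟨hdΓ', ?_⟩, rfl⟩
      simp only [decide_eq_true_eq]
      exact ⟨fun hdΓ => hdnot (List.mem_append_left Δ hdΓ), hdA⟩
    · -- head found in Γ: expansions coincide
      have : A' = A := by
        rw [ctxLookup_append_some hsm] at hbig
        exact (Option.some.inj hbig)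
      subst this
      rw [expandHeads_big_eq hctx hsm] at hw
      exact ⟨i, hw, rfl, hrefl⟩

end LambdaBar

/-- Lemma 12: if `Γ',Δ` is a context, `Γ ≤ Γ'`, and `T`
is maximally co-contracted w.r.t. `Γ,Δ`, then `[Γ',Δ/Γ,Δ]T ≈ [Γ'/Γ]T`,
where `≈` treats sums of elimination alternatives as sets. -/
theorem cocontract_extension_maxCoContracted (Γ Γ' Δ : Ctx) (T : BForest)
    (hctx : IsCtx (Γ' ++ Δ)) (hle : CtxLe Γ Γ')
    (hmcc : MaxCoContracted (Γ ++ Δ) T) :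
    SBisim (cocontract (Γ ++ Δ) (Γ' ++ Δ) T) (cocontract Γ Γ' T) := by
  refine ⟨fun U₁ U₂ => ∃ (Λ : Ctx) (T₁ T₂ : BForest), Bisim T₁ T₂ ∧
      MaxCoContracted (Λ ++ (Γ ++ Δ)) T₁ ∧
      U₁ = cocontract (Γ ++ Δ) (Γ' ++ Δ) T₁ ∧ U₂ = cocontract Γ Γ' T₂,
    fun U₁ U₂ h => ?_, [], T, T, bisim_refl T, hmcc, rfl, rfl⟩
  obtain ⟨Λ, T₁, T₂, hB, hM, rfl, rfl⟩ := h
  have hMs := mcc_dest hM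
  unfold MCCStep at hMs
  rcases hd1 : T₁.dest with ⟨a, f₁⟩
  rw [hd1] at hMs
  rcases a with ⟨x, A⟩ | l
  · obtain ⟨f₂, hd2, hBc⟩ := bisimStep_inl (bisim_dest hB) hd1
    unfold SBisimStep
    rw [cocontract_dest_inl hd1, cocontract_dest_inl hd2]
    exact ⟨rfl, (x, A) :: Λ, f₁ PUnit.unit, f₂ PUnit.unit, hBc, hMs, rfl, rfl⟩
  · obtain ⟨hHead, hCh⟩ := hMs
    obtain ⟨f₂, hd2, hBc⟩ := bisimStep_inr (bisim_dest hB) hd1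
    obtain ⟨G₁, hG1, hG1c⟩ := cocontract_dest_inr (Γ := Γ ++ Δ) (Γ' := Γ' ++ Δ) hd1
    obtain ⟨G₂, hG2, hG2c⟩ := cocontract_dest_inr (Γ := Γ) (Γ' := Γ') hd2
    unfold SBisimStep
    rw [hG1, hG2]
    constructor
    · -- forward direction
      intro iL
      obtain ⟨hiL, hlab1, heget⟩ := map_get_aux _ (entriesOf (Γ ++ Δ) (Γ' ++ Δ) l) iL
      set e := (entriesOf (Γ ++ Δ) (Γ' ++ Δ) l).get ⟨iL.val, hiL⟩ with he
      have hemem : e ∈ entriesOf (Γ ++ Δ) (Γ' ++ Δ) l := List.get_mem _ _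
      obtain ⟨hsh, har⟩ := entriesOf_shape hemem
      obtain ⟨i', hw', har', hbis⟩ := forward_match hctx hle e.2.2 ((hHead e.2.2).2) hsh
      obtain ⟨n, hn⟩ := List.get_of_mem (entriesOf_mem i' hw')
      have hnL : n.val < ((entriesOf Γ Γ' l).map fun e => (e.1, e.2.1)).length := by
        rw [List.length_map]; exact n.isLt
      obtain ⟨hn2, hlab2, hget2⟩ := map_get_aux (fun e => (e.1, e.2.1))
        (entriesOf Γ Γ' l) ⟨n.val, hnL⟩
      have hgetn : (entriesOf Γ Γ' l).get ⟨(n : ℕ), hn2⟩ = (e.1, (l.get i').2, i') := by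
        rw [← hn]
      have hn' : (entriesOf Γ Γ' l)[n.val]? = some (e.1, (l.get i').2, i') := by
        rw [hget2, hgetn]
      rw [hgetn] at hlab2
      refine ⟨⟨n.val, hnL⟩, ?_, ?_⟩
      · show (List.map (fun e => (e.1, e.2.1)) (entriesOf (Γ ++ Δ) (Γ' ++ Δ) l)).get iL
            = (List.map (fun e => (e.1, e.2.1)) (entriesOf Γ Γ' l)).get ⟨n.val, hnL⟩
        rw [hlab1, hlab2, har, har']
      · intro j j' hjj
        have h2 : j.val < (l.get e.2.2).2 := by
          have hj := j.isLt
          have hx : ((List.map (fun e => (e.1, e.2.1))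
              (entriesOf (Γ ++ Δ) (Γ' ++ Δ) l)).get iL).2 = (l.get e.2.2).2 := by
            rw [hlab1]; exact har
          omega
        have h2' : j'.val < (l.get i').2 := by
          have hj := j'.isLt
          have hx : ((List.map (fun e => (e.1, e.2.1))
              (entriesOf Γ Γ' l)).get ⟨n.val, hnL⟩).2 = (l.get i').2 := by
            rw [hlab2]
          omega
        rw [hG1c iL j e heget h2, hG2c ⟨n.val, hnL⟩ j' (e.1, (l.get i').2, i') hn' h2']
        exact ⟨Λ, _, _,
          bisim_trans (hbis ⟨j.val, h2⟩ ⟨j'.val, h2'⟩ hjj)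
            (hBc i' i' ⟨j'.val, h2'⟩ ⟨j'.val, h2'⟩ rfl rfl),
          hCh _, rfl, rfl⟩
    · -- backward direction
      intro iR
      obtain ⟨hiR, hlab2, heget⟩ := map_get_aux _ (entriesOf Γ Γ' l) iR
      set e := (entriesOf Γ Γ' l).get ⟨iR.val, hiR⟩ with he
      have hemem : e ∈ entriesOf Γ Γ' l := List.get_mem _ _
      obtain ⟨hsh, har⟩ := entriesOf_shape hemem
      have hw' : e.1 ∈ expandHeads (Γ ++ Δ) (Γ' ++ Δ) (l.get e.2.2).1 :=
        backward_match hctx hsh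
      obtain ⟨n, hn⟩ := List.get_of_mem (entriesOf_mem e.2.2 hw')
      have hnL : n.val < ((entriesOf (Γ ++ Δ) (Γ' ++ Δ) l).map fun e => (e.1, e.2.1)).length := by
        rw [List.length_map]; exact n.isLt
      obtain ⟨hn2, hlab1, hget1⟩ := map_get_aux (fun e => (e.1, e.2.1))
        (entriesOf (Γ ++ Δ) (Γ' ++ Δ) l) ⟨n.val, hnL⟩
      have hgetn : (entriesOf (Γ ++ Δ) (Γ' ++ Δ) l).get ⟨(n : ℕ), hn2⟩
          = (e.1, (l.get e.2.2).2, e.2.2) := by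
        rw [← hn]
      have hn' : (entriesOf (Γ ++ Δ) (Γ' ++ Δ) l)[n.val]?
          = some (e.1, (l.get e.2.2).2, e.2.2) := by
        rw [hget1, hgetn]
      rw [hgetn] at hlab1
      refine ⟨⟨n.val, hnL⟩, ?_, ?_⟩
      · show (List.map (fun e => (e.1, e.2.1)) (entriesOf (Γ ++ Δ) (Γ' ++ Δ) l)).get ⟨n.val, hnL⟩
            = (List.map (fun e => (e.1, e.2.1)) (entriesOf Γ Γ' l)).get iR
        rw [hlab1, hlab2, har]
      · intro j j' hjj
        have h2 : j.val < (l.get e.2.2).2 := by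
          have hj := j.isLt
          have hx : ((List.map (fun e => (e.1, e.2.1))
              (entriesOf (Γ ++ Δ) (Γ' ++ Δ) l)).get ⟨n.val, hnL⟩).2 = (l.get e.2.2).2 := by
            rw [hlab1]
          omega
        have h2' : j'.val < (l.get e.2.2).2 := by
          have hj := j'.isLt
          have hx : ((List.map (fun e => (e.1, e.2.1))
              (entriesOf Γ Γ' l)).get iR).2 = (l.get e.2.2).2 := by
            rw [hlab2]; exact har
          omega
        rw [hG1c ⟨n.val, hnL⟩ j (e.1, (l.get e.2.2).2, e.2.2) hn' h2,
          hG2c iR j' e heget h2']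
        exact ⟨Λ, _, _, hBc e.2.2 e.2.2 ⟨j.val, h2⟩ ⟨j'.val, h2'⟩ rfl hjj,
          hCh _, rfl, rfl⟩
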